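/- Let n ≥ 1, let p : Fin n → ℝ be a probability vector with p_i > 0 for all i, and let B ⊆ Fin n be a nonempty subset with p(B) = ∑_{j∈B} p_j. Consider the problem of minimizing H(q;p) = ∑_i q_i log(q_i/p_i) over all probability vectors q (q_i ≥ 0, ∑_i q_i = 1) subject to the constraint q_i = 0 for all i ∉ B. Then the unique minimizer is given by the Bayes rule q_i = p_i / p(B) for i ∈ B and q_i = 0 for i ∉ B, and the minimum value is −log p(B). -/

import Mathlib

open Finset

lemma aux_gibbs_term (a b : ℝ) (ha : 0 ≤ a) (hb : 0 < b) :
    a - b ≤ a * Real.log (a / b) ∧ (a * Real.log (a / b) = a - b ↔ a = b) := by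
  rcases eq_or_lt_of_le ha with h0 | h0
  · refine ⟨by simp [← h0]; linarith, ?_⟩
    simp [← h0]
    constructor
    · intro h; linarith
    · intro h; linarith
  · have hba : 0 < b / a := div_pos hb h0
    have hlog : Real.log (b / a) ≤ b / a - 1 := Real.log_le_sub_one_of_pos hba
    have hrw : a * Real.log (a / b) = -(a * Real.log (b / a)) := by
      rw [Real.log_div (ne_of_gt h0) (ne_of_gt hb), Real.log_div (ne_of_gt hb) (ne_of_gt h0)]
      ring
    have hab : a * (b / a - 1) = b - a := by field_simp
    constructor
    · rw [hrw]
      nlinarith [mul_le_mul_of_nonneg_left hlog (le_of_lt h0)]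
    · constructor
      · intro heq
        by_contra hne
        have hne' : b / a ≠ 1 := by
          intro h
          apply hne
          field_simp at h
          linarith
        have hstrict : Real.log (b / a) < b / a - 1 :=
          Real.log_lt_sub_one_of_pos hba hne'
        have := mul_lt_mul_of_pos_left hstrict h0
        rw [hrw] at heq
        nlinarith
      · intro heq
        subst heq
        rw [div_self (ne_of_gt h0), Real.log_one]
        ring

/-- Minimizing the relative entropy `H(q;p) = ∑ qᵢ log (qᵢ / pᵢ)` over
probability vectors supported on a nonempty subset `B` yields Bayes's rule:
the unique minimizer is `qᵢ = pᵢ / p(B)` on `B` and `0` off `B`, and the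
minimum value is `-log p(B)` where `p(B) = ∑_{j ∈ B} pⱼ`. -/
theorem min_relative_entropy_is_bayes_rule
    (n : ℕ) (hn : 1 ≤ n) (p : Fin n → ℝ) (hp : ∀ i, 0 < p i)
    (hpsum : ∑ i, p i = 1)
    (B : Finset (Fin n)) (hB : B.Nonempty) :
    ∀ q : Fin n → ℝ, (∀ i, 0 ≤ q i) → (∑ i, q i = 1) → (∀ i ∉ B, q i = 0) →
      (-Real.log (∑ j ∈ B, p j) ≤ ∑ i, q i * Real.log (q i / p i)) ∧
      ((∑ i, q i * Real.log (q i / p i) = -Real.log (∑ j ∈ B, p j)) ↔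
        ∀ i, q i = if i ∈ B then p i / (∑ j ∈ B, p j) else 0) := by
  intro q hq hqsum hqB0
  set S : ℝ := ∑ j ∈ B, p j with hSdef
  have hS : 0 < S := Finset.sum_pos (fun i _ => hp i) hB
  set r : Fin n → ℝ := fun i => p i / S with hrdef
  have hr : ∀ i, 0 < r i := fun i => div_pos (hp i) hS
  -- sums restrict to B
  have hsum_restrict : ∑ i, q i * Real.log (q i / p i)
      = ∑ i ∈ B, q i * Real.log (q i / p i) := by
    refine (Finset.sum_subset (Finset.subset_univ B) ?_).symm
    intro i _ hi
    rw [hqB0 i hi, zero_mul]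
  have hqBsum : ∑ i ∈ B, q i = 1 := by
    rw [← hqsum]
    exact Finset.sum_subset (Finset.subset_univ B) (fun i _ hi => hqB0 i hi)
  have hrBsum : ∑ i ∈ B, r i = 1 := by
    simp only [hrdef, ← Finset.sum_div, ← hSdef, div_self (ne_of_gt hS)]
  -- termwise decomposition on B
  have hterm : ∀ i ∈ B, q i * Real.log (q i / p i)
      = q i * Real.log (q i / r i) - q i * Real.log S := by
    intro i _
    rcases eq_or_lt_of_le (hq i) with h0 | h0
    · simp [← h0]
    · have hpi := hp i
      have hri := hr i
      rw [Real.log_div (ne_of_gt h0) (ne_of_gt hpi),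
        Real.log_div (ne_of_gt h0) (ne_of_gt hri)]
      have : Real.log (p i) = Real.log (r i) + Real.log S := by
        rw [← Real.log_mul (ne_of_gt hri) (ne_of_gt hS)]
        congr 1
        simp only [hrdef, div_mul_cancel₀ _ (ne_of_gt hS)]
      rw [this]; ring
  have hdecomp : ∑ i, q i * Real.log (q i / p i)
      = (∑ i ∈ B, q i * Real.log (q i / r i)) - Real.log S := by
    rw [hsum_restrict, Finset.sum_congr rfl hterm, Finset.sum_sub_distrib,
      ← Finset.sum_mul, hqBsum, one_mul]
  -- KL ≥ 0 with equality characterization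
  have hkey : ∀ i ∈ B, q i - r i ≤ q i * Real.log (q i / r i) :=
    fun i _ => (aux_gibbs_term (q i) (r i) (hq i) (hr i)).1
  have hKL : 0 ≤ ∑ i ∈ B, q i * Real.log (q i / r i) := by
    have := Finset.sum_le_sum hkey
    rw [Finset.sum_sub_distrib, hqBsum, hrBsum] at this
    linarith
  constructor
  · rw [hdecomp]; linarith
  · constructor
    · intro heq
      have hKL0 : ∑ i ∈ B, q i * Real.log (q i / r i) = 0 := by
        rw [hdecomp] at heq; linarith
      have hsum_eq : ∑ i ∈ B, (q i - r i) = ∑ i ∈ B, q i * Real.log (q i / r i) := by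
        rw [Finset.sum_sub_distrib, hqBsum, hrBsum, hKL0]; ring
      have := (Finset.sum_eq_sum_iff_of_le hkey).1 hsum_eq
      intro i
      by_cases hiB : i ∈ B
      · have : q i - r i = q i * Real.log (q i / r i) := this i hiB
        have hqr : q i = r i := (aux_gibbs_term (q i) (r i) (hq i) (hr i)).2.1 this.symm
        simp [hiB, hqr, hrdef]
      · simp [hiB, hqB0 i hiB]
    · intro hqform
      rw [hdecomp]
      have : ∑ i ∈ B, q i * Real.log (q i / r i) = 0 := by
        apply Finset.sum_eq_zero
        intro i hi
        have : q i = r i := by rw [hqform i, if_pos hi]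
        rw [this, div_self (ne_of_gt (hr i)), Real.log_one, mul_zero]
      rw [this]; ring
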